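/- For any two positive semidefinite real n × n matrices A and B, det(I + A + B) ≤ det(I + A) · det(I + B). Consequently, for data matrices Z₁, Z₂ and c > 0, log det(I + c(Z₁Z₁ᵀ + Z₂Z₂ᵀ)) ≤ log det(I + c Z₁Z₁ᵀ) + log det(I + c Z₂Z₂ᵀ). -/

import Mathlib

set_option maxHeartbeats 1000000
open Matrix

lemma aux_one_le_det {n : ℕ} {M : Matrix (Fin n) (Fin n) ℝ}
    (h : (M - 1).PosSemidef) : 1 ≤ M.det := by
  have hM : M.IsHermitian := by
    have := (h.add Matrix.PosSemidef.one).isHermitian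
    simpa using this
  rw [hM.det_eq_prod_eigenvalues]
  have key : ∀ i ∈ Finset.univ, (1:ℝ) ≤ hM.eigenvalues i := ?_
  · calc (1:ℝ) = ∏ _i : Fin n, 1 := by simp
      _ ≤ ∏ i, (hM.eigenvalues i : ℝ) :=
        Finset.prod_le_prod (fun i _ => zero_le_one) key
  intro i _
  have hv := hM.eigenvalues_eq i
  set v : Fin n → ℝ := ⇑(hM.eigenvectorBasis i) with hvdef
  have hnorm : star v ⬝ᵥ v = 1 := by
    have h1 : ‖hM.eigenvectorBasis i‖ = 1 := hM.eigenvectorBasis.orthonormal.1 i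
    have h2 : (inner ℝ (hM.eigenvectorBasis i) (hM.eigenvectorBasis i) : ℝ) = 1 := by
      rw [real_inner_self_eq_norm_sq, h1]; norm_num
    rw [EuclideanSpace.inner_eq_star_dotProduct] at h2
    exact h2
  have hpos := h.dotProduct_mulVec_nonneg v
  have hexp : star v ⬝ᵥ ((M - 1) *ᵥ v) = star v ⬝ᵥ (M *ᵥ v) - 1 := by
    rw [Matrix.sub_mulVec, dotProduct_sub, Matrix.one_mulVec, hnorm]
  rw [hexp] at hpos
  simp only [RCLike.re_to_real] at hpos hv
  rw [hv]
  linarith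

open scoped MatrixOrder in
lemma aux_sqrt {n : ℕ} {P : Matrix (Fin n) (Fin n) ℝ} (hP : P.PosSemidef) :
    ∃ S : Matrix (Fin n) (Fin n) ℝ, S.PosSemidef ∧ S * S = P :=
  ⟨CFC.sqrt P, (CFC.sqrt_nonneg P).posSemidef, CFC.sqrt_mul_sqrt_self P hP.nonneg⟩

lemma aux_det_le {n : ℕ} {P Q : Matrix (Fin n) (Fin n) ℝ}
    (hP : P.PosDef) (hQP : (Q - P).PosSemidef) : P.det ≤ Q.det := by
  obtain ⟨S, hS, SS⟩ : ∃ S : Matrix (Fin n) (Fin n) ℝ, S.PosSemidef ∧ S * S = P :=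
    aux_sqrt hP.posSemidef
  have hdetP : 0 < P.det := hP.det_pos
  have hdetS : S.det * S.det = P.det := by rw [← det_mul, SS]
  have hSu : IsUnit S.det := by
    refine isUnit_iff_ne_zero.mpr fun h => ?_
    rw [h, mul_zero] at hdetS; exact absurd hdetS.symm (ne_of_gt hdetP)
  have hinv1 : S * S⁻¹ = 1 := mul_nonsing_inv _ hSu
  have hinv2 : S⁻¹ * S = 1 := nonsing_inv_mul _ hSu
  have hSinvH : S⁻¹ᴴ = S⁻¹ := hS.inv.isHermitian
  set R := S⁻¹ * Q * S⁻¹ with hRdef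
  have hQ1 : S⁻¹ * P * S⁻¹ = 1 := by
    rw [← SS, Matrix.mul_assoc, Matrix.mul_assoc, hinv1, Matrix.mul_one, hinv2]
  have hR1 : R - 1 = S⁻¹ * (Q - P) * S⁻¹ := by
    rw [Matrix.mul_sub, Matrix.sub_mul, hQ1, hRdef]
  have hRpsd : (R - 1).PosSemidef := by
    rw [hR1]
    have := hQP.mul_mul_conjTranspose_same S⁻¹
    rwa [hSinvH] at this
  have hQeq : S * R * S = Q := by
    rw [hRdef]
    simp only [← Matrix.mul_assoc]
    rw [hinv1, Matrix.one_mul, Matrix.mul_assoc, hinv2, Matrix.mul_one]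
  have hQdet : Q.det = P.det * R.det := by
    rw [← hQeq, det_mul, det_mul]
    rw [← hdetS]; ring
  rw [hQdet]
  nlinarith [aux_one_le_det hRpsd]

lemma aux_main {n : ℕ} {A B : Matrix (Fin n) (Fin n) ℝ}
    (hA : A.PosSemidef) (hB : B.PosSemidef) :
    Matrix.det (1 + A + B) ≤ Matrix.det (1 + A) * Matrix.det (1 + B) := by
  have hP : (1 + A).PosDef := Matrix.PosDef.add_posSemidef Matrix.PosDef.one hA
  obtain ⟨S, hS, SS⟩ : ∃ S : Matrix (Fin n) (Fin n) ℝ, S.PosSemidef ∧ S * S = 1 + A :=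
    aux_sqrt hP.posSemidef
  have hdetP : 0 < (1 + A).det := hP.det_pos
  have hdetS : S.det * S.det = (1 + A).det := by rw [← det_mul, SS]
  have hSu : IsUnit S.det := by
    refine isUnit_iff_ne_zero.mpr fun h => ?_
    rw [h, mul_zero] at hdetS; exact absurd hdetS.symm (ne_of_gt hdetP)
  have hinv1 : S * S⁻¹ = 1 := mul_nonsing_inv _ hSu
  have hinv2 : S⁻¹ * S = 1 := nonsing_inv_mul _ hSu
  have hSinvH : S⁻¹ᴴ = S⁻¹ := hS.inv.isHermitian
  obtain ⟨T, hT, TT⟩ : ∃ T : Matrix (Fin n) (Fin n) ℝ, T.PosSemidef ∧ T * T = B :=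
    aux_sqrt hB
  have hTH : Tᴴ = T := hT.isHermitian
  -- decomposition
  have hC : 1 + A + B = S * (1 + S⁻¹ * B * S⁻¹) * S := by
    rw [Matrix.mul_add, Matrix.add_mul, Matrix.mul_one, SS]
    congr 1
    simp only [← Matrix.mul_assoc]
    rw [hinv1, Matrix.one_mul, Matrix.mul_assoc, hinv2, Matrix.mul_one]
  have hdet1 : Matrix.det (1 + A + B) = (1 + A).det * (1 + S⁻¹ * B * S⁻¹).det := by
    rw [hC, det_mul, det_mul, ← hdetS]; ring
  -- Weinstein–Aronszajn
  have hsplit : S⁻¹ * B * S⁻¹ = (S⁻¹ * T) * (T * S⁻¹) := by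
    rw [← TT]; simp only [← Matrix.mul_assoc]
  set D := (T * S⁻¹) * (S⁻¹ * T) with hDdef
  have hdet2 : (1 + S⁻¹ * B * S⁻¹).det = (1 + D).det := by
    rw [hsplit, det_one_add_mul_comm]
  -- D is PSD
  have hDpsd : D.PosSemidef := by
    have := posSemidef_self_mul_conjTranspose (T * S⁻¹)
    rwa [conjTranspose_mul, hSinvH, hTH] at this
  -- B - D is PSD
  have hTS : T * S⁻¹ * S = T := by rw [Matrix.mul_assoc, hinv2, Matrix.mul_one]
  have hTS' : T * S * S⁻¹ = T := by rw [Matrix.mul_assoc, hinv1, Matrix.mul_one]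
  have hBD : (B - D).PosSemidef := by
    have key : (T * S⁻¹) * A * (S⁻¹ * T) = B - D := by
      have hAeq : A = S * S - 1 := by rw [SS, add_sub_cancel_left]
      rw [hAeq, Matrix.mul_sub, Matrix.sub_mul, Matrix.mul_one, hDdef, ← TT]
      simp only [← Matrix.mul_assoc]
      rw [hTS, hTS']
    rw [← key]
    have := hA.mul_mul_conjTranspose_same (T * S⁻¹)
    rwa [conjTranspose_mul, hSinvH, hTH] at this
  -- conclude
  have hDpos : (1 + D).PosDef := Matrix.PosDef.add_posSemidef Matrix.PosDef.one hDpsd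
  have hfin : (1 + D).det ≤ (1 + B).det := by
    refine aux_det_le hDpos ?_
    have : (1 + B) - (1 + D) = B - D := add_sub_add_left_eq_sub B D 1
    rw [this]; exact hBD
  rw [hdet1, hdet2]
  exact mul_le_mul_of_nonneg_left hfin (le_of_lt hdetP)

lemma aux_smul_psd {n m : ℕ} (Z : Matrix (Fin n) (Fin m) ℝ) {c : ℝ} (hc : 0 ≤ c) :
    (c • (Z * Zᵀ)).PosSemidef := by
  have h := posSemidef_self_mul_conjTranspose (Real.sqrt c • Z)
  rw [conjTranspose_eq_transpose_of_trivial, transpose_smul, Matrix.smul_mul,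
    Matrix.mul_smul, smul_smul, Real.mul_self_sqrt hc] at h
  exact h

theorem stmt_4 (n : ℕ) :
    (∀ A B : Matrix (Fin n) (Fin n) ℝ, A.PosSemidef → B.PosSemidef →
      Matrix.det (1 + A + B) ≤ Matrix.det (1 + A) * Matrix.det (1 + B)) ∧
    (∀ (m₁ m₂ : ℕ) (Z₁ : Matrix (Fin n) (Fin m₁) ℝ) (Z₂ : Matrix (Fin n) (Fin m₂) ℝ)
      (c : ℝ), 0 < c →
      Real.log (Matrix.det (1 + c • (Z₁ * Z₁ᵀ + Z₂ * Z₂ᵀ))) ≤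
        Real.log (Matrix.det (1 + c • (Z₁ * Z₁ᵀ))) +
          Real.log (Matrix.det (1 + c • (Z₂ * Z₂ᵀ)))) := by
  refine ⟨fun A B hA hB => aux_main hA hB, fun m₁ m₂ Z₁ Z₂ c hc => ?_⟩
  have h1 : (c • (Z₁ * Z₁ᵀ)).PosSemidef := aux_smul_psd Z₁ hc.le
  have h2 : (c • (Z₂ * Z₂ᵀ)).PosSemidef := aux_smul_psd Z₂ hc.le
  have hd1 : 0 < Matrix.det (1 + c • (Z₁ * Z₁ᵀ)) :=
    (Matrix.PosDef.add_posSemidef Matrix.PosDef.one h1).det_pos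
  have hd2 : 0 < Matrix.det (1 + c • (Z₂ * Z₂ᵀ)) :=
    (Matrix.PosDef.add_posSemidef Matrix.PosDef.one h2).det_pos
  have hd0 : 0 < Matrix.det (1 + c • (Z₁ * Z₁ᵀ + Z₂ * Z₂ᵀ)) := by
    rw [smul_add]
    exact (Matrix.PosDef.add_posSemidef Matrix.PosDef.one (h1.add h2)).det_pos
  have hmain : Matrix.det (1 + c • (Z₁ * Z₁ᵀ + Z₂ * Z₂ᵀ)) ≤
      Matrix.det (1 + c • (Z₁ * Z₁ᵀ)) * Matrix.det (1 + c • (Z₂ * Z₂ᵀ)) := by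
    rw [smul_add, ← add_assoc]
    exact aux_main h1 h2
  calc Real.log (Matrix.det (1 + c • (Z₁ * Z₁ᵀ + Z₂ * Z₂ᵀ)))
      ≤ Real.log (Matrix.det (1 + c • (Z₁ * Z₁ᵀ)) * Matrix.det (1 + c • (Z₂ * Z₂ᵀ))) :=
        Real.log_le_log hd0 hmain
    _ = _ := Real.log_mul (ne_of_gt hd1) (ne_of_gt hd2)
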